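/- For all sufficiently large n the following holds: for all integers N, N' ∈ [n, 2n] and p ∈ {1,…,N}, |S(N,N',p)| ≤ n·(log n)^9. -/

import Mathlib

open Filter

noncomputable section

/-- The representative in `{1,…,N}` of `s + i*p` modulo `N`. -/
def idx (N s p i : ℕ) : ℕ := (s + i * p - 1) % N + 1

/-- `M_N = ⌈(2+β) log₂ N⌉`. -/
def MN (β : ℝ) (N : ℕ) : ℕ := Nat.ceil ((2 + β) * Real.logb 2 N)

/-- The progression `{s + i·p (mod N) : 1 ≤ i ≤ M_N}`. -/
def Prog (β : ℝ) (s p N : ℕ) : Finset ℕ :=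
  (Finset.Icc 1 (MN β N)).image fun i => idx N s p i

/-- `S(N,N',p)`: the set of triples `(s,s',p')`, `s ∈ [1,N]`, `s',p' ∈ [1,N']`, whose
associated progressions intersect in at least two points. -/
def S (β : ℝ) (N N' p : ℕ) : Finset (ℕ × ℕ × ℕ) :=
  ((Finset.Icc 1 N) ×ˢ (Finset.Icc 1 N') ×ˢ (Finset.Icc 1 N')).filter
    fun z => 2 ≤ (Prog β z.1 p N ∩ Prog β z.2.1 z.2.2 N').card

/-- Witness predicate: `t = (i₁,i₂,j₁,j₂,q₁,q₂)` witnesses that `z ∈ S`. -/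
def Q (β : ℝ) (N N' p : ℕ) (z : ℕ × ℕ × ℕ) (t : ℕ × ℕ × ℕ × ℕ × ℕ × ℕ) : Prop :=
  (1 ≤ t.1 ∧ t.1 ≤ MN β N) ∧ (1 ≤ t.2.1 ∧ t.2.1 ≤ MN β N) ∧
  (1 ≤ t.2.2.1 ∧ t.2.2.1 ≤ MN β N') ∧ (1 ≤ t.2.2.2.1 ∧ t.2.2.2.1 ≤ MN β N') ∧
  t.2.2.2.2.1 ≤ MN β N' ∧ t.2.2.2.2.2 ≤ MN β N' ∧
  t.2.2.1 ≠ t.2.2.2.1 ∧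
  z.2.1 + t.2.2.1 * z.2.2 = t.2.2.2.2.1 * N' + idx N z.1 p t.1 ∧
  z.2.1 + t.2.2.2.1 * z.2.2 = t.2.2.2.2.2 * N' + idx N z.1 p t.2.1

lemma idx_decomp {N s p i : ℕ} (hs : 1 ≤ s) (hp : 1 ≤ p) (hi : 1 ≤ i) :
    s + i * p = ((s + i * p - 1) / N) * N + idx N s p i := by
  have hip : 1 ≤ i * p := Nat.one_le_iff_ne_zero.mpr (Nat.mul_ne_zero (by omega) (by omega))
  have h2 := Nat.div_add_mod (s + i * p - 1) N
  unfold idx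
  rw [Nat.mul_comm ((s + i * p - 1) / N) N]
  generalize N * ((s + i * p - 1) / N) = v at h2 ⊢
  generalize (s + i * p - 1) % N = r at h2 ⊢
  generalize i * p = u at hip h2 ⊢
  omega

lemma div_bound {N s p i M : ℕ} (hN : 0 < N) (hs1 : 1 ≤ s) (hs : s ≤ N) (hp : p ≤ N)
    (hi : i ≤ M) : (s + i * p - 1) / N ≤ M := by
  have h1 : i * p ≤ M * N := Nat.mul_le_mul hi hp
  have h2 : (s + i * p - 1) / N < M + 1 := by
    rw [Nat.div_lt_iff_lt_mul hN]
    have h3 : (M + 1) * N = M * N + N := by ring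
    rw [h3]
    generalize i * p = u at h1 ⊢
    generalize M * N = v at h1 ⊢
    omega
  omega

lemma exists_wit (β : ℝ) {N N' p : ℕ} (hN' : 0 < N') {z : ℕ × ℕ × ℕ}
    (hz : z ∈ S β N N' p) : ∃ t, Q β N N' p z t := by
  obtain ⟨zs, za, zb⟩ := z
  rw [S, Finset.mem_filter] at hz
  obtain ⟨hmem, hcard⟩ := hz
  simp only [Finset.mem_product, Finset.mem_Icc] at hmem
  obtain ⟨⟨hzs1, hzsN⟩, ⟨hza1, hzaN⟩, ⟨hzb1, hzbN⟩⟩ := hmem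
  obtain ⟨x, hx, y, hy, hxy⟩ := Finset.one_lt_card.mp hcard
  rw [Finset.mem_inter] at hx hy
  obtain ⟨hx1, hx2⟩ := hx
  obtain ⟨hy1, hy2⟩ := hy
  rw [Prog, Finset.mem_image] at hx1 hx2 hy1 hy2
  obtain ⟨i₁, hi₁, hxi⟩ := hx1
  obtain ⟨j₁, hj₁, hxj⟩ := hx2
  obtain ⟨i₂, hi₂, hyi⟩ := hy1
  obtain ⟨j₂, hj₂, hyj⟩ := hy2
  rw [Finset.mem_Icc] at hi₁ hi₂ hj₁ hj₂
  have hd1 := idx_decomp (N := N') (i := j₁) hza1 hzb1 hj₁.1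
  have hd2 := idx_decomp (N := N') (i := j₂) hza1 hzb1 hj₂.1
  have hq1 : (za + j₁ * zb - 1) / N' ≤ MN β N' := div_bound hN' hza1 hzaN hzbN hj₁.2
  have hq2 : (za + j₂ * zb - 1) / N' ≤ MN β N' := div_bound hN' hza1 hzaN hzbN hj₂.2
  have hjne : j₁ ≠ j₂ := by
    intro h; apply hxy; rw [← hxj, ← hyj, h]
  refine ⟨(i₁, i₂, j₁, j₂, (za + j₁ * zb - 1) / N', (za + j₂ * zb - 1) / N'),
    hi₁, hi₂, hj₁, hj₂, hq1, hq2, hjne, ?_, ?_⟩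
  · show za + j₁ * zb = _ * N' + idx N zs p i₁
    rw [hxi, ← hxj]; exact hd1
  · show za + j₂ * zb = _ * N' + idx N zs p i₂
    rw [hyi, ← hyj]; exact hd2

lemma S_card_le (β : ℝ) (N N' p : ℕ) (hN' : 0 < N') :
    (S β N N' p).card ≤
      N * (MN β N * (MN β N * (MN β N' * (MN β N' *
        ((MN β N' + 1) * (MN β N' + 1)))))) := by
  classical
  have hcard : (S β N N' p).card ≤
      (Finset.Icc 1 N ×ˢ Finset.Icc 1 (MN β N) ×ˢ Finset.Icc 1 (MN β N) ×ˢ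
        Finset.Icc 1 (MN β N') ×ˢ Finset.Icc 1 (MN β N') ×ˢ
        Finset.Icc 0 (MN β N') ×ˢ Finset.Icc 0 (MN β N')).card := by
    apply Finset.card_le_card_of_injOn
      (fun z => (z.1, if h : ∃ t, Q β N N' p z t then h.choose else (0, 0, 0, 0, 0, 0)))
    · intro z hz
      have hex := exists_wit β hN' hz
      have hQ := hex.choose_spec
      simp only [dif_pos hex]
      have hz1 : z.1 ∈ Finset.Icc 1 N := by
        simp only [Finset.mem_coe, S, Finset.mem_filter] at hz
        exact (Finset.mem_product.mp hz.1).1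
      obtain ⟨h1, h2, h3, h4, h5, h6, _, _, _⟩ := hQ
      simp only [Finset.mem_coe, Finset.mem_product, Finset.mem_Icc] at hz1 ⊢
      exact ⟨hz1, h1, h2, h3, h4, ⟨Nat.zero_le _, h5⟩, ⟨Nat.zero_le _, h6⟩⟩
    · rintro ⟨zs, za, zb⟩ hz ⟨ws, wa, wb⟩ hw heq
      simp only [Prod.mk.injEq] at heq
      have hexz := exists_wit β hN' hz
      have hexw := exists_wit β hN' hw
      rw [dif_pos hexz, dif_pos hexw] at heq
      obtain ⟨hs, ht⟩ := heq
      have hQz := hexz.choose_spec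
      have hQw := hexw.choose_spec
      rw [← ht] at hQw
      obtain ⟨_, _, _, _, _, _, hjne, hz1, hz2⟩ := hQz
      obtain ⟨_, _, _, _, _, _, _, hw1, hw2⟩ := hQw
      simp only at hjne hz1 hz2 hw1 hw2
      rw [← hs] at hw1 hw2
      set i₁ := hexz.choose.1
      set i₂ := hexz.choose.2.1
      set j₁ := hexz.choose.2.2.1
      set j₂ := hexz.choose.2.2.2.1
      -- hz1 : za + j₁ * zb = q₁ * N' + idx N zs p i₁, hw1 : wa + j₁ * wb = same RHS
      have E1 : za + j₁ * zb = wa + j₁ * wb := by rw [hz1, hw1]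
      have E2 : za + j₂ * zb = wa + j₂ * wb := by rw [hz2, hw2]
      have E1' : (za : ℤ) + j₁ * zb = wa + j₁ * wb := by exact_mod_cast E1
      have E2' : (za : ℤ) + j₂ * zb = wa + j₂ * wb := by exact_mod_cast E2
      have hj' : (j₁ : ℤ) ≠ j₂ := by exact_mod_cast hjne
      have key : ((j₁ : ℤ) - j₂) * ((zb : ℤ) - wb) = 0 := by linear_combination E1' - E2'
      rcases mul_eq_zero.mp key with h | h
      · exact absurd (by linarith : (j₁ : ℤ) = (j₂ : ℤ)) hj'
      · have hbd : (zb : ℤ) = wb := by linarith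
        have hbd' : zb = wb := by exact_mod_cast hbd
        rw [hbd'] at E1
        have hac : za = wa := by omega
        simp only [Prod.mk.injEq]
        exact ⟨hs, hac, hbd'⟩
  refine hcard.trans (le_of_eq ?_)
  simp [Finset.card_product, Nat.card_Icc]

lemma MN_le {β : ℝ} (hβ0 : 0 < β) (hβ1 : β < 1) {n N : ℕ} (hn : 1 ≤ n) (h1 : n ≤ N)
    (h2 : N ≤ 2 * n) : (MN β N : ℝ) ≤ 6 * Real.log n + 4 := by
  have hN1 : (1 : ℝ) ≤ N := by exact_mod_cast le_trans hn h1
  have hn1 : (1 : ℝ) ≤ n := by exact_mod_cast hn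
  have hlogn : 0 ≤ Real.log n := Real.log_nonneg hn1
  have hlogN : 0 ≤ Real.logb 2 N := Real.logb_nonneg one_lt_two hN1
  have hceil : (MN β N : ℝ) < (2 + β) * Real.logb 2 N + 1 :=
    Nat.ceil_lt_add_one (mul_nonneg (by linarith) hlogN)
  have hmono : Real.logb 2 N ≤ Real.logb 2 (2 * (n : ℝ)) := by
    apply Real.logb_le_logb_of_le one_lt_two (by linarith)
    have : (N : ℝ) ≤ ((2 * n : ℕ) : ℝ) := by exact_mod_cast h2
    push_cast at this
    linarith
  have hlog2pos : 0 < Real.log 2 := Real.log_pos one_lt_two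
  have hlog2half : (1 : ℝ) / 2 ≤ Real.log 2 := by
    have := Real.log_two_gt_d9
    linarith
  have hsplit : Real.logb 2 (2 * (n : ℝ)) = 1 + Real.log n / Real.log 2 := by
    rw [Real.logb, Real.log_mul (by norm_num) (by linarith)]
    field_simp
  have hdiv : Real.log n / Real.log 2 ≤ 2 * Real.log n := by
    rw [div_le_iff₀ hlog2pos]
    nlinarith
  have hA : Real.logb 2 N ≤ 1 + 2 * Real.log n := by
    rw [hsplit] at hmono
    linarith
  have hB : (2 + β) * Real.logb 2 N ≤ 3 * (1 + 2 * Real.log n) :=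
    mul_le_mul (by linarith) hA hlogN (by norm_num)
  linarith

theorem S_card_bound (β : ℝ) (hβ : 0 < β) (hβ1 : β < 1) :
    ∀ᶠ n : ℕ in atTop, ∀ N N' : ℕ, N ∈ Finset.Icc n (2 * n) → N' ∈ Finset.Icc n (2 * n) →
      ∀ p ∈ Finset.Icc 1 N,
        ((S β N N' p).card : ℝ) ≤ (n : ℝ) * (Real.log n) ^ 9 := by
  have hlog : ∀ᶠ n : ℕ in atTop, (126 : ℝ) ≤ Real.log n :=
    (Real.tendsto_log_atTop.comp tendsto_natCast_atTop_atTop).eventually_ge_atTop 126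
  filter_upwards [hlog, eventually_ge_atTop 1] with n hL126 hn1
  intro N N' hN hN' p hp
  rw [Finset.mem_Icc] at hN hN'
  have hN'0 : 0 < N' := by omega
  have hkey := S_card_le β N N' p hN'0
  set L := Real.log n with hLdef
  have hL0 : (0 : ℝ) ≤ L := by linarith
  have hM : (MN β N : ℝ) ≤ 10 * L := by
    have := MN_le hβ hβ1 hn1 hN.1 hN.2
    linarith
  have hM'base := MN_le hβ hβ1 hn1 hN'.1 hN'.2
  have hM' : (MN β N' : ℝ) ≤ 10 * L := by linarith
  have hM'1 : (MN β N' : ℝ) + 1 ≤ 10 * L := by linarith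
  have hkeyR : ((S β N N' p).card : ℝ) ≤
      (N : ℝ) * ((MN β N : ℝ) * ((MN β N : ℝ) * ((MN β N' : ℝ) * ((MN β N' : ℝ) *
        (((MN β N' : ℝ) + 1) * ((MN β N' : ℝ) + 1)))))) := by
    exact_mod_cast hkey
  have hNle : (N : ℝ) ≤ 2 * n := by exact_mod_cast hN.2
  have hn0 : (0 : ℝ) ≤ (n : ℝ) := Nat.cast_nonneg n
  have hstep : ((S β N N' p).card : ℝ) ≤
      (2 * n) * ((10 * L) * ((10 * L) * ((10 * L) * ((10 * L) * ((10 * L) * (10 * L)))))) := by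
    refine hkeyR.trans ?_
    gcongr <;> positivity
  have hcube : (2 * 10 ^ 6 : ℝ) ≤ L ^ 3 := by
    have h := pow_le_pow_left₀ (by norm_num : (0 : ℝ) ≤ 126) hL126 3
    norm_num at h ⊢
    linarith
  calc ((S β N N' p).card : ℝ)
      ≤ (2 * n) * ((10 * L) * ((10 * L) * ((10 * L) * ((10 * L) * ((10 * L) * (10 * L)))))) :=
        hstep
    _ = (n : ℝ) * ((2 * 10 ^ 6) * L ^ 6) := by ring
    _ ≤ (n : ℝ) * (L ^ 3 * L ^ 6) := by
        apply mul_le_mul_of_nonneg_left _ hn0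
        exact mul_le_mul_of_nonneg_right hcube (by positivity)
    _ = (n : ℝ) * L ^ 9 := by ring
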